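/- (Bayes risk identity) Let M, Γ_prior, Γ_noise be symmetric positive definite (with Γ_prior M-symmetric on (ℝⁿ, ⟨·,·⟩_M) and Γ_noise on ℝ^q), F : ℝⁿ → ℝ^q linear with M-adjoint F*, H_misfit = F* Γ_noise⁻¹ F, Γ_post = (H_misfit + Γ_prior⁻¹)⁻¹, and for data y define m_post^y = Γ_post(F* Γ_noise⁻¹ y + Γ_prior⁻¹ m₀). If m ~ N(m₀, Γ_prior) on (ℝⁿ, ⟨·,·⟩_M) and, given m, y ~ N(F m, Γ_noise), then E_{m}[ E_{y|m}[ ‖m_post^y − m‖²_M ] ] = tr(Γ_post). -/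

import Mathlib

open MeasureTheory ProbabilityTheory Matrix

section Helpers

open Real

lemma aux_int_exp : Integrable (fun x : ℝ => rexp (-2⁻¹ * x ^ 2)) :=
  integrable_exp_neg_mul_sq (by norm_num)

lemma aux_int_sq_exp : Integrable (fun x : ℝ => x ^ 2 * rexp (-2⁻¹ * x ^ 2)) := by
  have h4 : Integrable (fun x : ℝ => 4 * rexp (-4⁻¹ * x ^ 2)) :=
    (integrable_exp_neg_mul_sq (by norm_num)).const_mul 4
  refine h4.mono' ?_ ?_
  · exact ((continuous_pow 2).mul
      ((continuous_const.mul (continuous_pow 2)).rexp)).aestronglyMeasurable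
  · filter_upwards with x
    have h1 : x ^ 2 ≤ 4 * rexp (4⁻¹ * x ^ 2) := by
      have := Real.add_one_le_exp (4⁻¹ * x ^ 2)
      nlinarith [Real.exp_pos (4⁻¹ * x ^ 2), sq_nonneg x]
    have h2 : (0:ℝ) < rexp (-2⁻¹ * x ^ 2) := Real.exp_pos _
    rw [Real.norm_eq_abs, abs_of_nonneg (by positivity)]
    calc x ^ 2 * rexp (-2⁻¹ * x ^ 2) ≤ (4 * rexp (4⁻¹ * x ^ 2)) * rexp (-2⁻¹ * x ^ 2) :=
          mul_le_mul_of_nonneg_right h1 h2.le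
      _ = 4 * rexp (-4⁻¹ * x ^ 2) := by
          rw [mul_assoc, ← Real.exp_add]; ring_nf

lemma aux_int_mul_exp : Integrable (fun x : ℝ => x * rexp (-2⁻¹ * x ^ 2)) := by
  have h := aux_int_exp.add aux_int_sq_exp
  refine h.mono' ?_ ?_
  · exact (continuous_id.mul
      ((continuous_const.mul (continuous_pow 2)).rexp)).aestronglyMeasurable
  · filter_upwards with x
    have h2 : (0:ℝ) < rexp (-2⁻¹ * x ^ 2) := Real.exp_pos _
    have habs : |x| ≤ 1 + x ^ 2 := by nlinarith [abs_nonneg x, sq_abs x]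
    rw [Real.norm_eq_abs, abs_mul, abs_of_nonneg h2.le]
    calc |x| * rexp (-2⁻¹ * x ^ 2) ≤ (1 + x ^ 2) * rexp (-2⁻¹ * x ^ 2) :=
          mul_le_mul_of_nonneg_right habs h2.le
      _ = rexp (-2⁻¹ * x ^ 2) + x ^ 2 * rexp (-2⁻¹ * x ^ 2) := by ring

lemma aux_I0 : ∫ x : ℝ, rexp (-2⁻¹ * x ^ 2) = √(2 * π) := by
  rw [integral_gaussian, show (π/(2⁻¹:ℝ)) = 2*π by ring]

lemma aux_I1 : ∫ x : ℝ, x * rexp (-2⁻¹ * x ^ 2) = 0 := by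
  have hder : ∀ x : ℝ, HasDerivAt (fun x : ℝ => -rexp (-2⁻¹ * x ^ 2))
      (x * rexp (-2⁻¹ * x ^ 2)) x := by
    intro x
    have : HasDerivAt (fun x : ℝ => -2⁻¹ * x ^ 2) (-2⁻¹ * (2 * x)) x :=
      ((hasDerivAt_pow 2 x).const_mul (-2⁻¹)).congr_deriv (by ring)
    have h2 : HasDerivAt (fun x : ℝ => -rexp (-2⁻¹ * x ^ 2)) _ x := (this.exp).neg
    convert h2 using 1; ring
  exact integral_eq_zero_of_hasDerivAt_of_integrable hder aux_int_mul_exp aux_int_exp.neg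

lemma aux_I2 : ∫ x : ℝ, x ^ 2 * rexp (-2⁻¹ * x ^ 2) = √(2 * π) := by
  have hder : ∀ x : ℝ, HasDerivAt (fun x : ℝ => x * rexp (-2⁻¹ * x ^ 2))
      (rexp (-2⁻¹ * x ^ 2) - x ^ 2 * rexp (-2⁻¹ * x ^ 2)) x := by
    intro x
    have h1 : HasDerivAt (fun x : ℝ => -2⁻¹ * x ^ 2) (-2⁻¹ * (2 * x)) x :=
      ((hasDerivAt_pow 2 x).const_mul (-2⁻¹)).congr_deriv (by ring)
    have h2 : HasDerivAt (fun x : ℝ => x * rexp (-2⁻¹ * x ^ 2)) _ x := (hasDerivAt_id x).mul h1.exp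
    convert h2 using 1; simp only [id_eq]; ring
  have h := integral_eq_zero_of_hasDerivAt_of_integrable hder
    (aux_int_exp.sub aux_int_sq_exp) aux_int_mul_exp
  rw [integral_sub aux_int_exp aux_int_sq_exp, sub_eq_zero] at h
  rw [← h, aux_I0]

lemma aux_pdf_eq (x : ℝ) :
    gaussianPDFReal 0 1 x = (√(2 * π))⁻¹ * rexp (-2⁻¹ * x ^ 2) := by
  simp only [gaussianPDFReal, NNReal.coe_one, mul_one, sub_zero]
  congr 1
  ring

lemma aux_pdf_nn : Measurable fun x : ℝ => (gaussianPDFReal 0 1 x).toNNReal :=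
  (measurable_gaussianPDFReal 0 1).real_toNNReal

lemma aux_gauss_density :
    gaussianReal 0 1 = (volume : Measure ℝ).withDensity
      (fun x => ((gaussianPDFReal 0 1 x).toNNReal : ENNReal)) := by
  rw [gaussianReal_of_var_ne_zero 0 one_ne_zero]
  rfl

lemma aux_integral_gauss (f : ℝ → ℝ) :
    ∫ x, f x ∂(gaussianReal 0 1)
      = ∫ x, gaussianPDFReal 0 1 x * f x := by
  rw [aux_gauss_density, integral_withDensity_eq_integral_smul aux_pdf_nn]
  congr 1
  funext x
  rw [NNReal.smul_def, smul_eq_mul, Real.coe_toNNReal _ (gaussianPDFReal_pos 0 1 x one_ne_zero).le]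

lemma aux_integrable_gauss_iff (f : ℝ → ℝ) :
    Integrable f (gaussianReal 0 1) ↔
      Integrable (fun x => gaussianPDFReal 0 1 x * f x) volume := by
  rw [aux_gauss_density, integrable_withDensity_iff_integrable_smul aux_pdf_nn]
  constructor <;> intro h <;> refine h.congr (Filter.Eventually.of_forall fun x => ?_) <;>
    simp only [NNReal.smul_def, smul_eq_mul,
      Real.coe_toNNReal _ (gaussianPDFReal_pos 0 1 x one_ne_zero).le]

lemma gauss_integrable_id : Integrable (fun x : ℝ => x) (gaussianReal 0 1) := by
  rw [aux_integrable_gauss_iff]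
  refine (aux_int_mul_exp.const_mul ((√(2 * π))⁻¹)).congr
    (Filter.Eventually.of_forall fun x => ?_)
  simp only [aux_pdf_eq]; ring

lemma gauss_integrable_sq : Integrable (fun x : ℝ => x * x) (gaussianReal 0 1) := by
  rw [aux_integrable_gauss_iff]
  refine (aux_int_sq_exp.const_mul ((√(2 * π))⁻¹)).congr
    (Filter.Eventually.of_forall fun x => ?_)
  simp only [aux_pdf_eq]; ring

lemma gauss_moment1 : ∫ x, x ∂(gaussianReal 0 1) = 0 := by
  rw [aux_integral_gauss]
  have : ∀ x : ℝ, gaussianPDFReal 0 1 x * x = (√(2 * π))⁻¹ * (x * rexp (-2⁻¹ * x ^ 2)) := by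
    intro x; rw [aux_pdf_eq]; ring
  simp_rw [this, MeasureTheory.integral_const_mul, aux_I1, mul_zero]

lemma gauss_moment2 : ∫ x, x * x ∂(gaussianReal 0 1) = 1 := by
  rw [aux_integral_gauss]
  have : ∀ x : ℝ, gaussianPDFReal 0 1 x * (x * x)
      = (√(2 * π))⁻¹ * (x ^ 2 * rexp (-2⁻¹ * x ^ 2)) := by
    intro x; rw [aux_pdf_eq]; ring
  simp_rw [this, MeasureTheory.integral_const_mul, aux_I2]
  rw [inv_mul_cancel₀]
  positivity

end Helpers

section Pi

set_option linter.unusedSectionVars false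

variable {ι : Type*} [Fintype ι] [DecidableEq ι]

local notation "γ" => (Measure.pi fun _ : ι => gaussianReal 0 1)

lemma pi_prod_repr (i j : ι) (x : ι → ℝ) :
    x i * x j = ∏ k, ((if k = i then x k else 1) * (if k = j then x k else 1)) := by
  rw [Finset.prod_mul_distrib, Finset.prod_ite_eq' Finset.univ i (fun k => x k),
    Finset.prod_ite_eq' Finset.univ j (fun k => x k)]
  simp

lemma pi_integrable_mul (i j : ι) :
    Integrable (fun x : ι → ℝ => x i * x j) γ := by
  letI : MeasureSpace ℝ := ⟨gaussianReal 0 1⟩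
  haveI : IsProbabilityMeasure (volume : Measure ℝ) :=
    inferInstanceAs (IsProbabilityMeasure (gaussianReal 0 1))
  haveI : SigmaFinite (volume : Measure ℝ) :=
    inferInstanceAs (SigmaFinite (gaussianReal 0 1))
  have hvol : (Measure.pi fun _ : ι => gaussianReal 0 1) = (volume : Measure (ι → ℝ)) := rfl
  rw [hvol]
  have h : ∀ k : ι, Integrable (fun t : ℝ =>
      (if k = i then t else 1) * (if k = j then t else 1)) := by
    intro k
    by_cases hi : k = i
    · subst hi
      by_cases hj : k = j
      · subst hj
        simp only [if_pos rfl, if_true]; exact (gauss_integrable_sq : Integrable _ (volume : Measure ℝ))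
      · simp only [if_pos rfl, if_neg hj, mul_one]
        exact (gauss_integrable_id : Integrable _ (volume : Measure ℝ))
    · by_cases hj : k = j
      · subst hj
        simp only [if_neg hi, if_pos rfl, one_mul]
        exact (gauss_integrable_id : Integrable _ (volume : Measure ℝ))
      · simp only [if_neg hi, if_neg hj, mul_one]
        exact integrable_const 1
  have h2 := MeasureTheory.Integrable.fintype_prod (𝕜 := ℝ) h
  refine h2.congr (Filter.Eventually.of_forall fun x => ?_)
  simp only []
  exact (pi_prod_repr i j x).symm

lemma pi_integral_mul (i j : ι) :
    ∫ x : ι → ℝ, x i * x j ∂γ = if i = j then 1 else 0 := by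
  letI : MeasureSpace ℝ := ⟨gaussianReal 0 1⟩
  haveI : IsProbabilityMeasure (volume : Measure ℝ) :=
    inferInstanceAs (IsProbabilityMeasure (gaussianReal 0 1))
  haveI : SigmaFinite (volume : Measure ℝ) :=
    inferInstanceAs (SigmaFinite (gaussianReal 0 1))
  have hvol : (Measure.pi fun _ : ι => gaussianReal 0 1) = (volume : Measure (ι → ℝ)) := rfl
  have hvol1 : (volume : Measure ℝ) = gaussianReal 0 1 := rfl
  rw [hvol]
  have hrepr : (fun x : ι → ℝ => x i * x j) = fun x =>
      ∏ k, ((if k = i then x k else 1) * (if k = j then x k else 1)) := by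
    funext x; exact pi_prod_repr i j x
  rw [hrepr, MeasureTheory.integral_fintype_prod_volume_eq_prod (𝕜 := ℝ)
    (fun k (t : ℝ) => (if k = i then t else 1) * (if k = j then t else 1))]
  by_cases hij : i = j
  · subst hij
    rw [if_pos rfl, Finset.prod_eq_single i]
    · simp only [if_pos rfl]
      rw [hvol1]
      exact gauss_moment2
    · intro k _ hk
      simp only [if_neg hk]
      rw [hvol1]
      simp
    · simp
  · rw [if_neg hij, Finset.prod_eq_zero (Finset.mem_univ i)]
    have heq : (fun t : ℝ => (if i = i then t else 1) * if i = j then t else 1)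
        = fun t : ℝ => t := by
      funext t; rw [if_pos rfl, if_neg hij, mul_one]
    rw [heq, hvol1]
    exact gauss_moment1

lemma pi_integrable_eval (i : ι) :
    Integrable (fun x : ι → ℝ => x i) γ := by
  letI : MeasureSpace ℝ := ⟨gaussianReal 0 1⟩
  haveI : IsProbabilityMeasure (volume : Measure ℝ) :=
    inferInstanceAs (IsProbabilityMeasure (gaussianReal 0 1))
  haveI : SigmaFinite (volume : Measure ℝ) :=
    inferInstanceAs (SigmaFinite (gaussianReal 0 1))
  have hvol : (Measure.pi fun _ : ι => gaussianReal 0 1) = (volume : Measure (ι → ℝ)) := rfl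
  rw [hvol]
  have h : ∀ k : ι, Integrable (fun t : ℝ => (if k = i then t else 1)) := by
    intro k
    by_cases hi : k = i
    · subst hi
      simp only [if_pos rfl, if_true]; exact (gauss_integrable_id : Integrable _ (volume : Measure ℝ))
    · simp only [if_neg hi]
      exact integrable_const 1
  have h2 := MeasureTheory.Integrable.fintype_prod (𝕜 := ℝ) h
  refine h2.congr (Filter.Eventually.of_forall fun x => ?_)
  simp only [Finset.prod_ite_eq' Finset.univ i (fun k => x k), Finset.mem_univ, if_true]

lemma pi_integral_eval (i : ι) : ∫ x : ι → ℝ, x i ∂γ = 0 := by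
  letI : MeasureSpace ℝ := ⟨gaussianReal 0 1⟩
  haveI : IsProbabilityMeasure (volume : Measure ℝ) :=
    inferInstanceAs (IsProbabilityMeasure (gaussianReal 0 1))
  haveI : SigmaFinite (volume : Measure ℝ) :=
    inferInstanceAs (SigmaFinite (gaussianReal 0 1))
  have hvol : (Measure.pi fun _ : ι => gaussianReal 0 1) = (volume : Measure (ι → ℝ)) := rfl
  have hvol1 : (volume : Measure ℝ) = gaussianReal 0 1 := rfl
  rw [hvol]
  have hrepr : (fun x : ι → ℝ => x i) = fun x => ∏ k, (if k = i then x k else 1) := by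
    funext x
    simp only [Finset.prod_ite_eq' Finset.univ i (fun k => x k), Finset.mem_univ, if_true]
  rw [hrepr, MeasureTheory.integral_fintype_prod_volume_eq_prod (𝕜 := ℝ)
    (fun k (t : ℝ) => (if k = i then t else 1))]
  rw [Finset.prod_eq_zero (Finset.mem_univ i)]
  simp only [if_pos rfl]
  rw [hvol1]
  exact gauss_moment1

lemma pi_integrable_linear (v : ι → ℝ) :
    Integrable (fun x : ι → ℝ => v ⬝ᵥ x) γ := by
  have h : (fun x : ι → ℝ => v ⬝ᵥ x) = fun x => ∑ i, v i * x i := by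
    funext x; rfl
  rw [h]
  exact integrable_finset_sum _ fun i _ => (pi_integrable_eval i).const_mul (v i)

lemma pi_integral_linear (v : ι → ℝ) : ∫ x : ι → ℝ, v ⬝ᵥ x ∂γ = 0 := by
  have h : (fun x : ι → ℝ => v ⬝ᵥ x) = fun x => ∑ i, v i * x i := by
    funext x; rfl
  rw [h, integral_finset_sum _ fun i _ => (pi_integrable_eval i).const_mul (v i)]
  simp only [MeasureTheory.integral_const_mul, pi_integral_eval, mul_zero, Finset.sum_const_zero]

lemma pi_quad_repr (C : Matrix ι ι ℝ) (x : ι → ℝ) :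
    x ⬝ᵥ (C *ᵥ x) = ∑ i, ∑ j, C i j * (x i * x j) := by
  simp only [dotProduct, Matrix.mulVec, Finset.mul_sum]
  refine Finset.sum_congr rfl fun i _ => Finset.sum_congr rfl fun j _ => ?_
  ring

lemma pi_integrable_quad (C : Matrix ι ι ℝ) :
    Integrable (fun x : ι → ℝ => x ⬝ᵥ (C *ᵥ x)) γ := by
  have h : (fun x : ι → ℝ => x ⬝ᵥ (C *ᵥ x)) = fun x => ∑ i, ∑ j, C i j * (x i * x j) := by
    funext x; exact pi_quad_repr C x
  rw [h]
  exact integrable_finset_sum _ fun i _ => integrable_finset_sum _ fun j _ =>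
    (pi_integrable_mul i j).const_mul (C i j)

lemma pi_integral_quad (C : Matrix ι ι ℝ) :
    ∫ x : ι → ℝ, x ⬝ᵥ (C *ᵥ x) ∂γ = C.trace := by
  have h0 : (fun x : ι → ℝ => x ⬝ᵥ (C *ᵥ x)) = fun x => ∑ i, ∑ j, C i j * (x i * x j) := by
    funext x; exact pi_quad_repr C x
  rw [h0, integral_finset_sum _ fun i _ => integrable_finset_sum _ fun j _ =>
    (pi_integrable_mul i j).const_mul (C i j)]
  have h1 : ∀ i : ι, ∫ x : ι → ℝ, ∑ j, C i j * (x i * x j) ∂γ = C i i := by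
    intro i
    rw [integral_finset_sum _ fun j _ => (pi_integrable_mul i j).const_mul (C i j)]
    simp only [MeasureTheory.integral_const_mul, pi_integral_mul]
    rw [Finset.sum_eq_single i]
    · simp
    · intro b _ hb
      simp [Ne.symm hb]
    · simp
  simp_rw [h1]
  rfl

end Pi

section MatrixHelpers

lemma dot3 {k l m : Type*} [Fintype k] [Fintype l] [Fintype m]
    (A : Matrix k l ℝ) (C : Matrix k m ℝ) (x : l → ℝ) (y : m → ℝ) :
    (A *ᵥ x) ⬝ᵥ (C *ᵥ y) = x ⬝ᵥ ((Aᵀ * C) *ᵥ y) := by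
  have hAx : A *ᵥ x = x ᵥ* Aᵀ := by
    rw [← Matrix.transpose_transpose A, Matrix.mulVec_transpose, Matrix.transpose_transpose]
  rw [Matrix.dotProduct_mulVec, hAx, Matrix.vecMul_vecMul, ← Matrix.dotProduct_mulVec]

lemma conjT {k : Type*} [Fintype k] [DecidableEq k]
    (M X : Matrix k k ℝ) (hMd : IsUnit M.det) (hMT : Mᵀ = M)
    (hsym : (M * X)ᵀ = M * X) : X⁻¹ᵀ = M * (X⁻¹ * M⁻¹) := by
  have hXT : Xᵀ = (M * X) * M⁻¹ := by
    have h1 : Xᵀ * M = M * X := by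
      rw [← hsym, Matrix.transpose_mul, hMT]
    rw [← h1, Matrix.mul_nonsing_inv_cancel_right _ _ hMd]
  rw [Matrix.transpose_nonsing_inv, hXT, Matrix.mul_inv_rev, Matrix.mul_inv_rev,
    Matrix.nonsing_inv_nonsing_inv _ hMd]

lemma sqrtU_facts {k : Type*} [Fintype k] [DecidableEq k] (A : Matrix k k ℝ) (hA : A.PosDef) :
    ((hA.1.eigenvectorUnitary : Matrix _ _ ℝ) * diagonal ((↑) ∘ Real.sqrt ∘ hA.1.eigenvalues) * (star hA.1.eigenvectorUnitary : Matrix _ _ ℝ))ᵀ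
      = (hA.1.eigenvectorUnitary : Matrix _ _ ℝ) * diagonal ((↑) ∘ Real.sqrt ∘ hA.1.eigenvalues) * (star hA.1.eigenvectorUnitary : Matrix _ _ ℝ) ∧
    ((hA.1.eigenvectorUnitary : Matrix _ _ ℝ) * diagonal ((↑) ∘ Real.sqrt ∘ hA.1.eigenvalues) * (star hA.1.eigenvectorUnitary : Matrix _ _ ℝ)) *
      ((hA.1.eigenvectorUnitary : Matrix _ _ ℝ) * diagonal ((↑) ∘ Real.sqrt ∘ hA.1.eigenvalues) * (star hA.1.eigenvectorUnitary : Matrix _ _ ℝ)) = A := by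
  have hsU : (star hA.1.eigenvectorUnitary : Matrix k k ℝ) * (hA.1.eigenvectorUnitary : Matrix k k ℝ) = 1 :=
    Unitary.coe_star_mul_self _
  constructor
  · rw [← conjTranspose_eq_transpose_of_trivial]
    simp [Matrix.star_eq_conjTranspose, Matrix.mul_assoc]
  · have hD : diagonal ((↑) ∘ Real.sqrt ∘ hA.1.eigenvalues) * diagonal ((↑) ∘ Real.sqrt ∘ hA.1.eigenvalues)
        = (diagonal ((↑) ∘ hA.1.eigenvalues) : Matrix k k ℝ) := by
      rw [diagonal_mul_diagonal]
      congr 1; funext i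
      simp [Real.mul_self_sqrt (hA.posSemidef.eigenvalues_nonneg i)]
    calc _ = (hA.1.eigenvectorUnitary : Matrix k k ℝ) * (diagonal ((↑) ∘ Real.sqrt ∘ hA.1.eigenvalues) *
          ((star hA.1.eigenvectorUnitary : Matrix k k ℝ) * (hA.1.eigenvectorUnitary : Matrix k k ℝ)) *
          diagonal ((↑) ∘ Real.sqrt ∘ hA.1.eigenvalues)) * (star hA.1.eigenvectorUnitary : Matrix k k ℝ) := by
            simp only [Matrix.mul_assoc]
      _ = A := by
            rw [hsU, Matrix.mul_one, hD]
            conv_rhs => rw [hA.1.spectral_theorem]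
            simp
            rfl

end MatrixHelpers

/-- Bayes risk identity: with `m ~ N(m₀, Γ_prior)` (in the `M`-inner product, realized
via the `M`-symmetric square root `S` of `Γ_prior`) and `y | m ~ N(F m, Γ_noise)`,
the expected squared `M`-norm error of the posterior mean equals `tr(Γ_post)`. -/
theorem stmt13 (n q : ℕ) (M Γp S : Matrix (Fin n) (Fin n) ℝ) (hM : M.PosDef)
    (hS : S * S = Γp) (hSM : M * S = Sᵀ * M)
    (hSpos : ∀ x : Fin n → ℝ, x ≠ 0 → 0 < x ⬝ᵥ (M *ᵥ (S *ᵥ x)))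
    (Γn : Matrix (Fin q) (Fin q) ℝ) (hΓn : Γn.PosDef)
    (F : Matrix (Fin q) (Fin n) ℝ) (m0 : Fin n → ℝ) :
    let Fstar := M⁻¹ * Fᵀ
    let Hm := Fstar * Γn⁻¹ * F
    let Γpost := (Hm + Γp⁻¹)⁻¹
    let mpost := fun y : Fin q → ℝ =>
      Γpost *ᵥ (Fstar *ᵥ (Γn⁻¹ *ᵥ y) + Γp⁻¹ *ᵥ m0)
    let γn := Measure.pi fun _ : Fin n => gaussianReal 0 1
    let γq := Measure.pi fun _ : Fin q => gaussianReal 0 1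
    let mm := fun ξ : Fin n → ℝ => m0 + (S * (((hM.1.eigenvectorUnitary : Matrix _ _ ℝ) * diagonal ((↑) ∘ Real.sqrt ∘ hM.1.eigenvalues) * (star hM.1.eigenvectorUnitary : Matrix _ _ ℝ)))⁻¹) *ᵥ ξ
    (∫ ξ, (∫ η,
        (fun e : Fin n → ℝ => e ⬝ᵥ (M *ᵥ e))
          (mpost (F *ᵥ mm ξ + (((hΓn.1.eigenvectorUnitary : Matrix _ _ ℝ) * diagonal ((↑) ∘ Real.sqrt ∘ hΓn.1.eigenvalues) * (star hΓn.1.eigenvectorUnitary : Matrix _ _ ℝ))) *ᵥ η) - mm ξ) ∂γq) ∂γn)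
      = Γpost.trace := by
  intro Fstar Hm Γpost mpost γn γq mm
  -- rfl equations for the let-bound variables
  have hFstar : Fstar = M⁻¹ * Fᵀ := rfl
  have hHm : Hm = Fstar * Γn⁻¹ * F := rfl
  have hΓpost : Γpost = (Hm + Γp⁻¹)⁻¹ := rfl
  have hmpost : ∀ y, mpost y = Γpost *ᵥ (Fstar *ᵥ (Γn⁻¹ *ᵥ y) + Γp⁻¹ *ᵥ m0) := fun _ => rfl
  have hγn : γn = Measure.pi fun _ : Fin n => gaussianReal 0 1 := rfl
  have hγq : γq = Measure.pi fun _ : Fin q => gaussianReal 0 1 := rfl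
  set W : Matrix (Fin n) (Fin n) ℝ := ((hM.1.eigenvectorUnitary : Matrix _ _ ℝ) * diagonal ((↑) ∘ Real.sqrt ∘ hM.1.eigenvalues) * (star hM.1.eigenvectorUnitary : Matrix _ _ ℝ)) with hWdef
  set B : Matrix (Fin q) (Fin q) ℝ := ((hΓn.1.eigenvectorUnitary : Matrix _ _ ℝ) * diagonal ((↑) ∘ Real.sqrt ∘ hΓn.1.eigenvalues) * (star hΓn.1.eigenvectorUnitary : Matrix _ _ ℝ)) with hBdef
  have hmm : ∀ ξ, mm ξ = m0 + (S * W⁻¹) *ᵥ ξ := fun _ => rfl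
  set A : Matrix (Fin n) (Fin n) ℝ := S * W⁻¹ with hAdef
  -- basic symmetry facts
  have hMT : Mᵀ = M := hM.isHermitian
  have hΓnT : Γnᵀ = Γn := hΓn.isHermitian
  have hWT : Wᵀ = W := (sqrtU_facts M hM).1
  have hBT : Bᵀ = B := (sqrtU_facts Γn hΓn).1
  have hWW : W * W = M := (sqrtU_facts M hM).2
  have hBB : B * B = Γn := (sqrtU_facts Γn hΓn).2
  -- determinant facts
  have hMdet : IsUnit M.det := isUnit_iff_ne_zero.mpr hM.det_pos.ne'
  have hΓndet : IsUnit Γn.det := isUnit_iff_ne_zero.mpr hΓn.det_pos.ne'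
  have hSdet : IsUnit S.det := by
    rw [isUnit_iff_ne_zero]
    intro h0
    obtain ⟨v, hv, hv0⟩ := (Matrix.exists_mulVec_eq_zero_iff).mpr h0
    have := hSpos v hv
    rw [hv0] at this
    simp at this
  have hΓpdet : IsUnit Γp.det := by
    rw [← hS, Matrix.det_mul]
    exact hSdet.mul hSdet
  -- inverse transposes
  have hMiT : M⁻¹ᵀ = M⁻¹ := by rw [Matrix.transpose_nonsing_inv, hMT]
  have hΓniT : Γn⁻¹ᵀ = Γn⁻¹ := by rw [Matrix.transpose_nonsing_inv, hΓnT]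
  have hWiT : W⁻¹ᵀ = W⁻¹ := by rw [Matrix.transpose_nonsing_inv, hWT]
  -- M-symmetry of Γp and of Γp⁻¹
  have hMΓp_symm : (M * Γp)ᵀ = M * Γp := by
    have h1 : M * Γp = Sᵀ * (M * S) := by
      conv_lhs => rw [← hS, ← Matrix.mul_assoc, hSM, Matrix.mul_assoc]
    rw [h1]
    simp only [Matrix.transpose_mul, Matrix.transpose_transpose, hMT, Matrix.mul_assoc]
  have hgpT : Γp⁻¹ᵀ = M * (Γp⁻¹ * M⁻¹) := conjT M Γp hMdet hMT hMΓp_symm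
  have hMgp_symm : (M * Γp⁻¹)ᵀ = M * Γp⁻¹ := by
    rw [Matrix.transpose_mul, hMT, hgpT, Matrix.mul_assoc,
      Matrix.nonsing_inv_mul_cancel_right _ _ hMdet]
  -- S transpose
  have hSt : Sᵀ = M * (S * M⁻¹) := by
    have h1 : Sᵀ = Sᵀ * M * M⁻¹ := (Matrix.mul_nonsing_inv_cancel_right _ _ hMdet).symm
    rw [h1, ← hSM, Matrix.mul_assoc]
  -- M * Hm
  have hMHm : M * Hm = Fᵀ * (Γn⁻¹ * F) := by
    rw [hHm, hFstar]
    simp only [Matrix.mul_assoc]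
    rw [Matrix.mul_nonsing_inv_cancel_left _ _ hMdet]
  have hMHm_symm : (M * Hm)ᵀ = M * Hm := by
    rw [hMHm]
    simp only [Matrix.transpose_mul, Matrix.transpose_transpose, hΓniT, Matrix.mul_assoc]
  -- symmetry of M * K where K = Hm + Γp⁻¹
  have hMK_symm : (M * (Hm + Γp⁻¹))ᵀ = M * (Hm + Γp⁻¹) := by
    rw [Matrix.mul_add, Matrix.transpose_add, hMHm_symm, hMgp_symm]
  -- positivity: K is invertible
  have hKdet : IsUnit (Hm + Γp⁻¹).det := by
    rw [isUnit_iff_ne_zero]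
    intro h0
    obtain ⟨z, hz, hz0⟩ := (Matrix.exists_mulVec_eq_zero_iff).mpr h0
    have hzero : z ⬝ᵥ ((M * (Hm + Γp⁻¹)) *ᵥ z) = 0 := by
      rw [← Matrix.mulVec_mulVec, hz0, Matrix.mulVec_zero, dotProduct_zero]
    have hexp : z ⬝ᵥ ((M * (Hm + Γp⁻¹)) *ᵥ z)
        = z ⬝ᵥ ((Fᵀ * (Γn⁻¹ * F)) *ᵥ z) + z ⬝ᵥ ((M * Γp⁻¹) *ᵥ z) := by
      rw [Matrix.mul_add, Matrix.add_mulVec, dotProduct_add, hMHm]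
    have hterm1 : 0 ≤ z ⬝ᵥ ((Fᵀ * (Γn⁻¹ * F)) *ᵥ z) := by
      have h1 : z ⬝ᵥ ((Fᵀ * (Γn⁻¹ * F)) *ᵥ z) = (F *ᵥ z) ⬝ᵥ (Γn⁻¹ *ᵥ (F *ᵥ z)) := by
        rw [← Matrix.mul_assoc, ← Matrix.mulVec_mulVec, ← dot3]
      rw [h1]
      have := hΓn.inv.posSemidef.dotProduct_mulVec_nonneg (F *ᵥ z)
      simpa using this
    have hterm2 : 0 < z ⬝ᵥ ((M * Γp⁻¹) *ᵥ z) := by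
      set w := Γp⁻¹ *ᵥ z with hw
      have hzw : z = Γp *ᵥ w := by
        rw [hw, Matrix.mulVec_mulVec, Matrix.mul_nonsing_inv _ hΓpdet, Matrix.one_mulVec]
      have hwne : w ≠ 0 := by
        intro h0'
        rw [h0', Matrix.mulVec_zero] at hzw
        exact hz hzw
      have h1 : z ⬝ᵥ ((M * Γp⁻¹) *ᵥ z) = (Γp *ᵥ w) ⬝ᵥ (M *ᵥ w) := by
        rw [← Matrix.mulVec_mulVec, ← hw, ← hzw]
      have hgpM : Γpᵀ * M = M * Γp := by
        conv_lhs => rw [← hMT, ← Matrix.transpose_mul, hMΓp_symm]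
      have h2 : (Γp *ᵥ w) ⬝ᵥ (M *ᵥ w) = w ⬝ᵥ ((M * Γp) *ᵥ w) := by
        rw [dot3, hgpM]
      have h3 : 0 < w ⬝ᵥ ((M * Γp) *ᵥ w) := by
        have hMS : M * Γp = Sᵀ * (M * S) := by
          conv_lhs => rw [← hS, ← Matrix.mul_assoc, hSM, Matrix.mul_assoc]
        rw [hMS, ← dot3 S, ← Matrix.mulVec_mulVec]
        · have hSw : S *ᵥ w ≠ 0 := by
            intro h0'
            have := hSpos w hwne
            rw [h0', Matrix.mulVec_zero, dotProduct_zero] at this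
            exact lt_irrefl 0 this
          have := hM.dotProduct_mulVec_pos hSw
          simpa [Matrix.mulVec_mulVec] using this
      rw [h1, h2]
      exact h3
    rw [hexp] at hzero
    linarith
  -- key algebraic facts about Γpost
  have hpost : Γpost * (Hm + Γp⁻¹) = 1 := by
    rw [hΓpost]; exact Matrix.nonsing_inv_mul _ hKdet
  have hpostT : Γpostᵀ = M * (Γpost * M⁻¹) := by
    rw [hΓpost]; exact conjT M (Hm + Γp⁻¹) hMdet hMT hMK_symm
  -- cancellation lemmas
  have cMi : ∀ X : Matrix (Fin n) (Fin n) ℝ, M⁻¹ * (M * X) = X :=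
    fun X => Matrix.nonsing_inv_mul_cancel_left _ _ hMdet
  have cM : ∀ X : Matrix (Fin n) (Fin n) ℝ, M * (M⁻¹ * X) = X :=
    fun X => Matrix.mul_nonsing_inv_cancel_left _ _ hMdet
  have cW : ∀ X : Matrix (Fin n) (Fin n) ℝ, W⁻¹ * (W⁻¹ * X) = M⁻¹ * X := by
    intro X
    rw [← Matrix.mul_assoc, ← Matrix.mul_inv_rev, hWW]
  have cS : ∀ X : Matrix (Fin n) (Fin n) ℝ, S * (S * X) = Γp * X := by
    intro X
    rw [← Matrix.mul_assoc, hS]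
  have cgp : ∀ X : Matrix (Fin n) (Fin n) ℝ, Γp⁻¹ * (Γp * X) = X :=
    fun X => Matrix.nonsing_inv_mul_cancel_left _ _ hΓpdet
  have cgp' : ∀ X : Matrix (Fin n) (Fin n) ℝ, Γp * (Γp⁻¹ * X) = X :=
    fun X => Matrix.mul_nonsing_inv_cancel_left _ _ hΓpdet
  have cB : ∀ X : Matrix (Fin q) (Fin n) ℝ, B * (B * X) = Γn * X := by
    intro X
    rw [← Matrix.mul_assoc, hBB]
  have cgn : ∀ X : Matrix (Fin q) (Fin n) ℝ, Γn * (Γn⁻¹ * X) = X :=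
    fun X => Matrix.mul_nonsing_inv_cancel_left _ _ hΓndet
  have cgn' : ∀ X : Matrix (Fin q) (Fin n) ℝ, Γn⁻¹ * (Γn * X) = X :=
    fun X => Matrix.nonsing_inv_mul_cancel_left _ _ hΓndet
  -- the error decomposition matrices
  set P : Matrix (Fin n) (Fin n) ℝ := Γpost * (Γp⁻¹ * A) with hPdef
  set Q : Matrix (Fin n) (Fin q) ℝ := Γpost * (Fstar * (Γn⁻¹ * B)) with hQdef
  -- Step 1: pointwise identity
  have key : ∀ (ξ : Fin n → ℝ) (η : Fin q → ℝ),
      mpost (F *ᵥ mm ξ + B *ᵥ η) - mm ξ = Q *ᵥ η - P *ᵥ ξ := by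
    intro ξ η
    rw [hmpost, hmm]
    have hy : Fstar *ᵥ (Γn⁻¹ *ᵥ (F *ᵥ (m0 + A *ᵥ ξ) + B *ᵥ η)) + Γp⁻¹ *ᵥ m0
        = (Hm + Γp⁻¹) *ᵥ (m0 + A *ᵥ ξ) - Γp⁻¹ *ᵥ (A *ᵥ ξ) + (Fstar * (Γn⁻¹ * B)) *ᵥ η := by
      rw [hHm]
      simp only [Matrix.mulVec_add, Matrix.add_mulVec, Matrix.add_mul, Matrix.mulVec_mulVec,
        Matrix.mul_assoc]
      abel
    rw [hy, Matrix.mulVec_add, Matrix.mulVec_sub]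
    simp only [Matrix.mulVec_mulVec]
    rw [hpost, Matrix.one_mulVec, ← hPdef, ← hQdef]
    abel
  -- probability measure instances
  haveI hPn : IsProbabilityMeasure γn :=
    inferInstanceAs (IsProbabilityMeasure (Measure.pi fun _ : Fin n => gaussianReal 0 1))
  haveI hPq : IsProbabilityMeasure γq :=
    inferInstanceAs (IsProbabilityMeasure (Measure.pi fun _ : Fin q => gaussianReal 0 1))
  -- Step 2: inner integral
  have hinner : ∀ ξ : Fin n → ℝ,
      (∫ η, (fun e : Fin n → ℝ => e ⬝ᵥ (M *ᵥ e))
        (mpost (F *ᵥ mm ξ + B *ᵥ η) - mm ξ) ∂γq)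
      = (Qᵀ * (M * Q)).trace + ξ ⬝ᵥ ((Pᵀ * (M * P)) *ᵥ ξ) := by
    intro ξ
    have hptw : ∀ η : Fin q → ℝ,
        (fun e : Fin n → ℝ => e ⬝ᵥ (M *ᵥ e)) (mpost (F *ᵥ mm ξ + B *ᵥ η) - mm ξ)
        = η ⬝ᵥ ((Qᵀ * (M * Q)) *ᵥ η)
          - ((Qᵀ * M) *ᵥ (P *ᵥ ξ)) ⬝ᵥ η
          - ((P *ᵥ ξ) ᵥ* (M * Q)) ⬝ᵥ η
          + ξ ⬝ᵥ ((Pᵀ * (M * P)) *ᵥ ξ) := by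
      intro η
      simp only []
      rw [key ξ η]
      have t1 : (Q *ᵥ η) ⬝ᵥ (M *ᵥ (Q *ᵥ η)) = η ⬝ᵥ ((Qᵀ * (M * Q)) *ᵥ η) := by
        rw [Matrix.mulVec_mulVec, dot3]
      have t2 : (Q *ᵥ η) ⬝ᵥ (M *ᵥ (P *ᵥ ξ)) = ((Qᵀ * M) *ᵥ (P *ᵥ ξ)) ⬝ᵥ η := by
        rw [dot3, dotProduct_comm]
      have t3 : (P *ᵥ ξ) ⬝ᵥ (M *ᵥ (Q *ᵥ η)) = ((P *ᵥ ξ) ᵥ* (M * Q)) ⬝ᵥ η := by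
        rw [Matrix.mulVec_mulVec, Matrix.dotProduct_mulVec]
      have t4 : (P *ᵥ ξ) ⬝ᵥ (M *ᵥ (P *ᵥ ξ)) = ξ ⬝ᵥ ((Pᵀ * (M * P)) *ᵥ ξ) := by
        rw [Matrix.mulVec_mulVec, dot3]
      rw [Matrix.mulVec_sub, dotProduct_sub, sub_dotProduct,
        sub_dotProduct, t1, t2, t3, t4]
      ring
    rw [integral_congr_ae (Filter.Eventually.of_forall hptw)]
    rw [hγq]
    have i1 := pi_integrable_quad (ι := Fin q) (Qᵀ * (M * Q))
    have i2 := pi_integrable_linear (ι := Fin q) ((Qᵀ * M) *ᵥ (P *ᵥ ξ))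
    have i3 := pi_integrable_linear (ι := Fin q) ((P *ᵥ ξ) ᵥ* (M * Q))
    have i12 : Integrable (fun x : Fin q → ℝ =>
        x ⬝ᵥ ((Qᵀ * (M * Q)) *ᵥ x) - ((Qᵀ * M) *ᵥ (P *ᵥ ξ)) ⬝ᵥ x)
        (Measure.pi fun _ : Fin q => gaussianReal 0 1) := i1.sub i2
    have i123 : Integrable (fun x : Fin q → ℝ =>
        x ⬝ᵥ ((Qᵀ * (M * Q)) *ᵥ x) - ((Qᵀ * M) *ᵥ (P *ᵥ ξ)) ⬝ᵥ x
          - ((P *ᵥ ξ) ᵥ* (M * Q)) ⬝ᵥ x)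
        (Measure.pi fun _ : Fin q => gaussianReal 0 1) := i12.sub i3
    rw [integral_add i123 (integrable_const _),
      integral_sub i12 i3, integral_sub i1 i2,
      pi_integral_quad, pi_integral_linear, pi_integral_linear, integral_const]
    simp
  -- Step 3: outer integral
  have houter : (∫ ξ, (∫ η,
      (fun e : Fin n → ℝ => e ⬝ᵥ (M *ᵥ e))
        (mpost (F *ᵥ mm ξ + B *ᵥ η) - mm ξ) ∂γq) ∂γn)
      = (Qᵀ * (M * Q)).trace + (Pᵀ * (M * P)).trace := by
    rw [integral_congr_ae (Filter.Eventually.of_forall hinner), hγn]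
    rw [integral_add (integrable_const _) (pi_integrable_quad (ι := Fin n) (Pᵀ * (M * P))),
      integral_const, pi_integral_quad]
    simp
  rw [houter]
  -- Step 4: trace algebra
  have hPtr : (Pᵀ * (M * P)).trace = (Γpost * (Γp⁻¹ * Γpost)).trace := by
    rw [Matrix.trace_mul_comm]
    have hE : (M * P) * Pᵀ = (M * (Γpost * (Γp⁻¹ * Γpost))) * M⁻¹ := by
      rw [hPdef, hAdef]
      simp only [Matrix.transpose_mul, hpostT, hgpT, hSt, hWiT, Matrix.mul_assoc]
      simp only [cMi, cM, cW, cS, cgp, cgp']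
    rw [hE, Matrix.trace_mul_comm, Matrix.nonsing_inv_mul_cancel_left _ _ hMdet]
  have hQtr : (Qᵀ * (M * Q)).trace = (Γpost * (Hm * Γpost)).trace := by
    rw [Matrix.trace_mul_comm]
    have hE : (M * Q) * Qᵀ = (M * (Γpost * (Hm * Γpost))) * M⁻¹ := by
      rw [hQdef, hHm, hFstar]
      simp only [Matrix.transpose_mul, hpostT, hΓniT, hMiT, hBT, Matrix.transpose_transpose,
        Matrix.mul_assoc]
      simp only [cMi, cM, cB, cgn, cgn']
    rw [hE, Matrix.trace_mul_comm, Matrix.nonsing_inv_mul_cancel_left _ _ hMdet]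
  rw [hPtr, hQtr, ← Matrix.trace_add, ← Matrix.mul_add, ← Matrix.add_mul,
    ← Matrix.mul_assoc, hpost, Matrix.one_mul]
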